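/- Let b ≥ 2 be an integer, d ≥ 1, s ≥ 1, and let {x_0,…,x_{b^m−1}} ⊂ [0,1)^{ds} be a (t,m,ds)-net in base b. Then {𝒟_d(x_0),…,𝒟_d(x_{b^m−1})} ⊂ [0,1)^s is a (t,m,s)-net in base b. -/

import Mathlib

open MeasureTheory Set

noncomputable section

namespace Paper

/-- The `i`-th base-`b` digit of `x ∈ [0,1)` (for `i ≥ 1`), using the expansion in which
infinitely many digits differ from `b-1` (i.e. the floor-based expansion). -/
def bdigit (b : ℕ) (x : ℝ) (i : ℕ) : ℕ := (⌊x * (b : ℝ) ^ i⌋).toNat % b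

/-- A `b`-adic rational in `[0,1)`: a number with a finite base-`b` expansion. -/
def IsBadicRational (b : ℕ) (x : ℝ) : Prop := ∃ (n k : ℕ), x = (n : ℝ) / (b : ℝ) ^ k

/-- The `k`-th Walsh function in base `b`. -/
def wal (b k : ℕ) (x : ℝ) : ℂ :=
  Complex.exp (2 * Real.pi * Complex.I / b) ^
    (∑ j ∈ Finset.range k, bdigit b x (j + 1) * (k / b ^ j % b))

/-- The multidimensional Walsh function. -/
def walV (b s : ℕ) (k : Fin s → ℕ) (x : Fin s → ℝ) : ℂ := ∏ j, wal b (k j) (x j)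

/-- Digitwise addition modulo `b` of nonnegative integers. -/
def baddN (b k l : ℕ) : ℕ :=
  ∑ j ∈ Finset.range (k + l), ((k / b ^ j % b + l / b ^ j % b) % b) * b ^ j

/-- Digitwise addition modulo `b` on `[0,1)`. -/
def baddR (b : ℕ) (x y : ℝ) : ℝ :=
  ∑' i : ℕ, (((bdigit b x (i + 1) + bdigit b y (i + 1)) % b : ℕ) : ℝ) / (b : ℝ) ^ (i + 1)

/-- Digitwise subtraction modulo `b` on `[0,1)`. -/
def bsubR (b : ℕ) (x y : ℝ) : ℝ :=
  ∑' i : ℕ, (((bdigit b x (i + 1) + (b - bdigit b y (i + 1))) % b : ℕ) : ℝ) / (b : ℝ) ^ (i + 1)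

/-- The unit box `[0,1)^s`. -/
def unitBox (s : ℕ) : Set (Fin s → ℝ) := Set.univ.pi fun _ => Set.Ico (0 : ℝ) 1

/-- The closed unit cube `[0,1]^s`. -/
def unitCube (s : ℕ) : Set (Fin s → ℝ) := Set.univ.pi fun _ => Set.Icc (0 : ℝ) 1

/-- The digit interlacing function `𝒟_d : [0,1)^d → [0,1)`. -/
def interlaceR (b d : ℕ) (x : Fin d → ℝ) : ℝ :=
  ∑' a : ℕ, ∑ r : Fin d, (bdigit b (x r) (a + 1) : ℝ) / (b : ℝ) ^ ((r : ℕ) + 1 + a * d)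

/-- The digit interlacing function on nonnegative integers. -/
def interlaceN (b d : ℕ) (k : Fin d → ℕ) : ℕ :=
  ∑ r : Fin d, ∑ a ∈ Finset.range (k r), (k r / b ^ a % b) * b ^ ((r : ℕ) + a * d)

/-- The index of position `r` of block `i` inside `Fin (d*s)`. -/
def embIdx (d s : ℕ) (i : Fin s) (r : Fin d) : Fin (d * s) :=
  ⟨(i : ℕ) * d + (r : ℕ), by
    calc (i : ℕ) * d + (r : ℕ) < (i : ℕ) * d + d := by have := r.2; omega
      _ = ((i : ℕ) + 1) * d := (Nat.succ_mul _ _).symm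
      _ ≤ s * d := Nat.mul_le_mul_right d i.2
      _ = d * s := Nat.mul_comm s d⟩

/-- Blockwise digit interlacing `𝒟_d : [0,1)^{ds} → [0,1)^s`. -/
def interlaceB (b d s : ℕ) (x : Fin (d * s) → ℝ) : Fin s → ℝ :=
  fun i => interlaceR b d fun r => x (embIdx d s i r)

/-- Blockwise digit interlacing on integer vectors, `ℕ₀^{ds} → ℕ₀^s`. -/
def interlaceBN (b d s : ℕ) (k : Fin (d * s) → ℕ) : Fin s → ℕ :=
  fun i => interlaceN b d fun r => k (embIdx d s i r)

/-- `P` is a `(t,m,s)`-net in base `b`. -/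
def IsNet (b m s t : ℕ) (P : Fin (b ^ m) → Fin s → ℝ) : Prop :=
  ∀ dv : Fin s → ℕ, ∑ i, dv i ≤ m - t →
    ∀ av : Fin s → ℕ, (∀ i, av i < b ^ dv i) →
      (Finset.univ.filter fun n =>
        ∀ i, P n i ∈ Set.Ico ((av i : ℝ) / (b : ℝ) ^ dv i) (((av i : ℝ) + 1) / (b : ℝ) ^ dv i)).card
        = b ^ (m - ∑ i, dv i)

/-- `P` is a digital net over `ℤ_b` generated by `m × m` matrices `C_1, …, C_s`. -/
def IsDigitalNet (b m s : ℕ) (P : Fin (b ^ m) → Fin s → ℝ) : Prop :=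
  ∃ C : Fin s → Matrix (Fin m) (Fin m) (ZMod b),
    ∀ n : Fin (b ^ m), ∀ i : Fin s,
      P n i = ∑ j : Fin m,
        (((C i).mulVec fun r : Fin m => (((n : ℕ) / b ^ (r : ℕ) % b : ℕ) : ZMod b)) j).val
          / (b : ℝ) ^ ((j : ℕ) + 1)

/-- One-dimensional finite difference `Δ_α(x; z_1,…,z_α) f`. -/
def fdiff (f : ℝ → ℝ) (α : ℕ) (x : ℝ) (z : Fin α → ℝ) : ℝ :=
  ∑ v : Finset (Fin α), (-1 : ℝ) ^ v.card * f (x + ∑ i ∈ v, z i)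

/-- Multidimensional finite difference `Δ_𝛂(x; z_1,…,z_s) f`. -/
def fdiffV (s : ℕ) (f : (Fin s → ℝ) → ℝ) (αv : Fin s → ℕ) (x : Fin s → ℝ)
    (z : (i : Fin s) → Fin (αv i) → ℝ) : ℝ :=
  ∑ v : (i : Fin s) → Finset (Fin (αv i)),
    (-1 : ℝ) ^ (∑ i, (v i).card) * f fun i => x i + ∑ r ∈ v i, z i r

/-- Apply a permutation of `{0,…,b-1}` to a natural number `< b`. -/
def applyPerm (b : ℕ) (π : Equiv.Perm (Fin b)) (n : ℕ) : ℕ :=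
  if h : n < b then (π ⟨n, h⟩ : Fin b) else n

/-- The list of the first `k` base-`b` digits of `x`. -/
def digitList (b : ℕ) (x : ℝ) (k : ℕ) : List ℕ :=
  (List.range k).map fun j => bdigit b x (j + 1)

/-- Owen's scrambling of `x ∈ [0,1)` by the family `F` of permutations (indexed by
digit prefixes): the `k`-th digit `ξ_k` is replaced by `π_{ξ_1,…,ξ_{k-1}}(ξ_k)`. -/
def scrambleR (b : ℕ) (F : List ℕ → Equiv.Perm (Fin b)) (x : ℝ) : ℝ :=
  ∑' k : ℕ, (applyPerm b (F (digitList b x k)) (bdigit b x (k + 1)) : ℝ) / (b : ℝ) ^ (k + 1)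

/-- `sc` is a random Owen scrambling: a random family of permutations of `{0,…,b-1}`,
one for each of the `D` coordinates and each digit prefix, all chosen independently
and uniformly at random. -/
def IsUniformScrambling {Ω : Type*} [MeasurableSpace Ω] (μ : Measure Ω) (b D : ℕ)
    (sc : Ω → Fin D → List ℕ → Equiv.Perm (Fin b)) : Prop :=
  letI : MeasurableSpace (Equiv.Perm (Fin b)) := ⊤
  (∀ i l, Measurable fun ω => sc ω i l) ∧
    ProbabilityTheory.iIndepFun (m := fun _ : Fin D × List ℕ => (⊤ : MeasurableSpace (Equiv.Perm (Fin b))))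
      (fun p : Fin D × List ℕ => fun ω => sc ω p.1 p.2) μ ∧
    ∀ i l π, μ {ω | sc ω i l = π} = ((b.factorial : ENNReal))⁻¹

/-- `k` belongs to the digit box determined by `l`: `⌊b^{l-1}⌋ ≤ k < b^l`. -/
def inBl (b l k : ℕ) : Prop := b ^ l / b ≤ k ∧ k < b ^ l

/-- `k_r`: the part of `k` supported on base-`b` digits at positions `≡ r (mod d)`. -/
def kpart (b d k r : ℕ) : ℕ :=
  ∑ j ∈ Finset.range k, if j % d = r then (k / b ^ j % b) * b ^ j else 0

/-- The digits of `x` and `x'` in the arithmetic progression of positions `r, r+d, r+2d, …`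
(0-indexed; digit position `r + j·d` is the `(r+1+j·d)`-th digit) agree for `j' < j` and
differ at `j`; i.e. `β_r + 1 = j`. -/
def firstDiffAt (b d : ℕ) (x x' : ℝ) (r j : ℕ) : Prop :=
  (∀ j' < j, bdigit b x (r + 1 + j' * d) = bdigit b x' (r + 1 + j' * d)) ∧
    bdigit b x (r + 1 + j * d) ≠ bdigit b x' (r + 1 + j * d)

/-- The Walsh coefficient `f̂(k)` of `f : [0,1]^s → ℝ`. -/
def fhat (b s : ℕ) (f : (Fin s → ℝ) → ℝ) (k : Fin s → ℕ) : ℂ :=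
  ∫ x in unitBox s, (f x : ℂ) * (starRingEnd ℂ) (walV b s k x)

/-- `σ²_{d,ℓ,s}(f) = Σ_{k ∈ B_{d,ℓ,s}} |f̂(𝒟_d(k))|²`. -/
def sigmaSq (b d s : ℕ) (ℓ : Fin (d * s) → ℕ) (f : (Fin s → ℝ) → ℝ) : ℝ :=
  ∑ k ∈ Fintype.piFinset (fun j => Finset.Ico (b ^ ℓ j / b) (b ^ ℓ j)),
    ‖fhat b s f (interlaceBN b d s k)‖ ^ 2

/-- The gain coefficient `Γ_{d,ℓ}(P)` of order `d`, computed with a representative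
`k ∈ B_{d,ℓ,s}`, for a scrambling family `sc` and a left inverse `Dinv1` of `𝒟_d`. -/
def gainCoef {Ω : Type*} [MeasurableSpace Ω] (μ : Measure Ω) (b d s m : ℕ)
    (sc : Ω → Fin (d * s) → List ℕ → Equiv.Perm (Fin b))
    (Dinv1 : ℝ → Fin d → ℝ) (P : Fin (b ^ m) → Fin s → ℝ) (k : Fin (d * s) → ℕ) : ℂ :=
  (b : ℂ) ^ (-(2 * m : ℤ)) * ∑ n : Fin (b ^ m), ∑ n' : Fin (b ^ m), ∏ i : Fin s,
    ∫ ω, (∏ r : Fin d, wal b (k (embIdx d s i r))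
            (scrambleR b (sc ω (embIdx d s i r)) (Dinv1 (P n i) r))) *
      (starRingEnd ℂ) (∏ r : Fin d, wal b (k (embIdx d s i r))
            (scrambleR b (sc ω (embIdx d s i r)) (Dinv1 (P n' i) r))) ∂μ

/-- The `b`-adic box `∏_i [a_i b^{-l_i}, (a_i+1) b^{-l_i})`. -/
def badicBox (b n : ℕ) (l a : Fin n → ℕ) : Set (Fin n → ℝ) :=
  Set.univ.pi fun i => Set.Ico ((a i : ℝ) / (b : ℝ) ^ l i) (((a i : ℝ) + 1) / (b : ℝ) ^ l i)

/-- A partition of `[0,1)^n` into `b`-adic boxes (each encoded by its pair `(l, a)`). -/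
def IsBadicPartition (b n : ℕ) (Part : Finset ((Fin n → ℕ) × (Fin n → ℕ))) : Prop :=
  (∀ p ∈ Part, ∀ i, 1 ≤ p.1 i ∧ p.2 i < b ^ p.1 i) ∧
    (∀ p ∈ Part, ∀ q ∈ Part, p ≠ q → Disjoint (badicBox b n p.1 p.2) (badicBox b n q.1 q.2)) ∧
    (⋃ p ∈ Part, badicBox b n p.1 p.2) = unitBox n

/-- The increment `z_{i,r} = τ b^{-α(l_i - 1) - r}` (with `r` one-indexed). -/
def zval (b α s : ℕ) (l : Fin (α * s) → ℕ) (τ : ℤ) (i r : ℕ) : ℝ :=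
  (τ : ℝ) * (b : ℝ) ^ (-(α : ℤ) * ((if h : i < α * s then (l ⟨i, h⟩ : ℤ) else 0) - 1) - ((r : ℤ) + 1))

/-- The inner supremum in the definition of the generalized Vitali variation. -/
def vitaliInner (b α s : ℕ) (αv : Fin s → ℕ) (f : (Fin s → ℝ) → ℝ)
    (l a : Fin (α * s) → ℕ) : ENNReal :=
  ⨆ (t : Fin s → ℝ) (τ : (i : Fin s) → Fin (αv i) → ℤ)
    (_ : t ∈ interlaceB b α s '' badicBox b (α * s) l a)
    (_ : ∀ i r, τ i r ≠ 0 ∧ 1 - (b : ℤ) ≤ τ i r ∧ τ i r ≤ (b : ℤ) - 1)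
    (_ : ∀ v : (i : Fin s) → Finset (Fin (αv i)),
      (fun i => t i + ∑ r ∈ v i, zval b α s l (τ i r) (i : ℕ) (r : ℕ)) ∈
        interlaceB b α s '' badicBox b (α * s) (fun i => l i - 1) (fun i => a i / b)),
    ENNReal.ofReal
      ((fdiffV s f αv t (fun i r => zval b α s l (τ i r) (i : ℕ) (r : ℕ)) /
        ∏ i, ∏ r : Fin (αv i), zval b α s l (τ i r) (i : ℕ) (r : ℕ)) ^ 2)

/-- The generalized Vitali variation `V^{(s)}_𝛂(f)`. -/
def vitaliVar (b α s : ℕ) (αv : Fin s → ℕ) (f : (Fin s → ℝ) → ℝ) : ENNReal :=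
  ⨆ (Part : Finset ((Fin (α * s) → ℕ) × (Fin (α * s) → ℕ))) (_ : IsBadicPartition b (α * s) Part),
    (∑ p ∈ Part, volume (interlaceB b α s '' badicBox b (α * s) p.1 p.2) *
      vitaliInner b α s αv f p.1 p.2) ^ (1 / 2 : ℝ)

/-- The marginal `f_u` of `f`, as a function of the coordinates in `u`
(listed in increasing order). -/
def marginal (s : ℕ) (u : Finset (Fin s)) (f : (Fin s → ℝ) → ℝ) (y : Fin u.card → ℝ) : ℝ :=
  ∫ x in unitBox s, f fun i => if h : i ∈ u then y ((u.orderIsoOfFin rfl).symm ⟨i, h⟩) else x i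

/-- The generalized Hardy–Krause variation `V_α(f)` of order `α`. -/
def hkVar (b α s : ℕ) (f : (Fin s → ℝ) → ℝ) : ENNReal :=
  (∑ u : Finset (Fin s),
    if u = ∅ then ENNReal.ofReal |∫ x in unitBox s, f x| ^ 2
    else ∑ αv ∈ Fintype.piFinset (fun _ : Fin u.card => Finset.Icc 1 α),
      vitaliVar b α u.card αv (marginal s u f) ^ 2) ^ (1 / 2 : ℝ)

/-- `K_i`: the indices of the `i`-th block where `ℓ` is positive. -/
def Kblock (d s : ℕ) (ℓ : Fin (d * s) → ℕ) (i : Fin s) : Finset (Fin (d * s)) :=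
  Finset.univ.filter fun j => 0 < ℓ j ∧ (j : ℕ) / d = (i : ℕ)

/-- `γ(ℓ) = ∏_i ∏_{j=1}^{α_i} γ_{i,j}`, the product over each block of the
`min(α,|K_i|)` smallest of the numbers `γ'_j = (b-1) b^{-j+(i-1)d-(l_j-1)d}`, `j ∈ K_i`. -/
def gammaEll (b d s α : ℕ) (ℓ : Fin (d * s) → ℕ) : ℝ :=
  ∏ i : Fin s,
    ((((Kblock d s ℓ i).image fun j : Fin (d * s) =>
        (b - 1 : ℝ) * (b : ℝ) ^ (-(((j : ℕ) % d : ℤ) + 1) - ((ℓ j : ℤ) - 1) * d)).sort (· ≤ ·)).take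
      (min α (Kblock d s ℓ i).card)).prod



section Statement7Aux

/-- MSB-first digit encoding: `∑_{p<k} c p * b^(k-1-p)`. -/
def enc (b : ℕ) (c : ℕ → ℕ) (k : ℕ) : ℕ := ∑ p ∈ Finset.range k, c p * b ^ (k - 1 - p)

lemma enc_succ (b : ℕ) (c : ℕ → ℕ) (k : ℕ) : enc b c (k + 1) = b * enc b c k + c k := by
  unfold enc
  rw [Finset.sum_range_succ, Finset.mul_sum]
  congr 1
  · apply Finset.sum_congr rfl
    intro p hp
    have h : k + 1 - 1 - p = (k - 1 - p) + 1 := by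
      have := Finset.mem_range.mp hp; omega
    rw [h, pow_succ]; ring
  · simp

lemma enc_congr (b : ℕ) (c c' : ℕ → ℕ) (k : ℕ) (h : ∀ p < k, c p = c' p) :
    enc b c k = enc b c' k := by
  unfold enc
  exact Finset.sum_congr rfl fun p hp => by rw [h p (Finset.mem_range.mp hp)]

lemma enc_lt (b : ℕ) (hb : 0 < b) (c : ℕ → ℕ) (k : ℕ) (hc : ∀ p < k, c p < b) :
    enc b c k < b ^ k := by
  induction k with
  | zero => simp [enc]
  | succ k ih =>
    have h1 : enc b c k < b ^ k := ih fun p hp => hc p (by omega)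
    have h2 : c k < b := hc k (by omega)
    rw [enc_succ, pow_succ]
    calc b * enc b c k + c k < b * enc b c k + b := by omega
      _ = b * (enc b c k + 1) := by ring
      _ ≤ b * b ^ k := by
          exact Nat.mul_le_mul_left b (by omega)
      _ = b ^ k * b := by ring

lemma enc_digit (b : ℕ) (hb : 0 < b) (c : ℕ → ℕ) (k : ℕ) (hc : ∀ p < k, c p < b)
    (p : ℕ) (hp : p < k) : enc b c k / b ^ (k - 1 - p) % b = c p := by
  induction k generalizing p with
  | zero => omega
  | succ k ih =>
    rw [enc_succ]
    rcases Nat.lt_or_ge p k with h | h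
    · have he : k + 1 - 1 - p = (k - 1 - p) + 1 := by omega
      rw [he, pow_succ, mul_comm (b ^ (k - 1 - p)) b, ← Nat.div_div_eq_div_mul,
        Nat.mul_add_div hb, Nat.div_eq_of_lt (hc k (by omega)), Nat.add_zero]
      exact ih (fun q hq => hc q (by omega)) p h
    · have hpk : p = k := by omega
      subst hpk
      simp [Nat.mul_add_mod, Nat.mod_eq_of_lt (hc p (by omega))]

/-- LSB digit injectivity. -/
lemma digits_inj_lsb (b : ℕ) (k : ℕ) : ∀ M N : ℕ, M < b ^ k → N < b ^ k →
    (∀ a < k, M / b ^ a % b = N / b ^ a % b) → M = N := by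
  induction k with
  | zero => intro M N hM hN _; simp at hM hN; omega
  | succ k ih =>
    intro M N hM hN h
    have hb : 0 < b := by
      rcases Nat.eq_zero_or_pos b with h0 | h0
      · subst h0; simp at hM
      · exact h0
    have hmod : M % b = N % b := by simpa using h 0 (by omega)
    have hMd : M / b < b ^ k := by
      rw [Nat.div_lt_iff_lt_mul hb]; rw [pow_succ] at hM; exact hM
    have hNd : N / b < b ^ k := by
      rw [Nat.div_lt_iff_lt_mul hb]; rw [pow_succ] at hN; exact hN
    have hdig : ∀ a < k, (M / b) / b ^ a % b = (N / b) / b ^ a % b := by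
      intro a ha
      rw [Nat.div_div_eq_div_mul, Nat.div_div_eq_div_mul, ← pow_succ']
      exact h (a + 1) (by omega)
    have hdiv : M / b = N / b := ih _ _ hMd hNd hdig
    have hM' : M = b * (M / b) + M % b := (Nat.div_add_mod M b).symm
    rw [hM', hdiv, hmod, Nat.div_add_mod]

/-- MSB digit injectivity. -/
lemma digits_inj (b k M N : ℕ) (hM : M < b ^ k) (hN : N < b ^ k)
    (h : ∀ p < k, M / b ^ (k - 1 - p) % b = N / b ^ (k - 1 - p) % b) : M = N := by
  apply digits_inj_lsb b k M N hM hN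
  intro a ha
  have := h (k - 1 - a) (by omega)
  have he : k - 1 - (k - 1 - a) = a := by omega
  rwa [he] at this

lemma enc_msb_digits (b : ℕ) (hb : 0 < b) (k av : ℕ) (hav : av < b ^ k) :
    enc b (fun p => av / b ^ (k - 1 - p) % b) k = av := by
  apply digits_inj b k _ _ (enc_lt b hb _ k fun p _ => Nat.mod_lt _ hb) hav
  intro p hp
  rw [enc_digit b hb _ k (fun q _ => Nat.mod_lt _ hb) p hp]


section RealDigits

variable {b : ℕ} {x : ℝ}

lemma bdigit_lt (hb : 0 < b) (x : ℝ) (i : ℕ) : bdigit b x i < b := Nat.mod_lt _ hb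

lemma bdigit_cast_eq (hb : 0 < b) (hx : 0 ≤ x) (k : ℕ) :
    (bdigit b x (k + 1) : ℤ) = ⌊(b : ℝ) * Int.fract (x * (b : ℝ) ^ k)⌋ := by
  set z := x * (b : ℝ) ^ k with hz
  have hz0 : 0 ≤ z := mul_nonneg hx (by positivity)
  have h1 : x * (b : ℝ) ^ (k + 1) = (b : ℝ) * Int.fract z + ((b * ⌊z⌋ : ℤ) : ℝ) := by
    rw [Int.fract]; push_cast; rw [pow_succ]; ring
  have h2 : ⌊x * (b : ℝ) ^ (k + 1)⌋ = ⌊(b : ℝ) * Int.fract z⌋ + b * ⌊z⌋ := by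
    rw [h1, Int.floor_add_intCast]
  have hA0 : 0 ≤ ⌊(b : ℝ) * Int.fract z⌋ :=
    Int.floor_nonneg.mpr (mul_nonneg (by positivity) (Int.fract_nonneg z))
  have hAb : ⌊(b : ℝ) * Int.fract z⌋ < b := by
    rw [Int.floor_lt]
    push_cast
    calc (b : ℝ) * Int.fract z < (b : ℝ) * 1 := by
          apply mul_lt_mul_of_pos_left (Int.fract_lt_one z)
          exact_mod_cast hb
      _ = b := mul_one _
  have hZ0 : 0 ≤ ⌊z⌋ := Int.floor_nonneg.mpr hz0
  have hfl0 : 0 ≤ ⌊x * (b : ℝ) ^ (k + 1)⌋ :=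
    Int.floor_nonneg.mpr (mul_nonneg hx (by positivity))
  unfold bdigit
  push_cast
  rw [Int.toNat_of_nonneg hfl0, h2, Int.add_mul_emod_self_left,
    Int.emod_eq_of_lt hA0 (by exact_mod_cast hAb)]

lemma floor_succ_digit (hb : 0 < b) (hx : 0 ≤ x) (k : ℕ) :
    ⌊x * (b : ℝ) ^ (k + 1)⌋ = b * ⌊x * (b : ℝ) ^ k⌋ + (bdigit b x (k + 1) : ℤ) := by
  rw [bdigit_cast_eq hb hx k]
  set z := x * (b : ℝ) ^ k with hz
  have h1 : x * (b : ℝ) ^ (k + 1) = (b : ℝ) * Int.fract z + ((b * ⌊z⌋ : ℤ) : ℝ) := by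
    rw [Int.fract]; push_cast; rw [pow_succ]; ring
  rw [h1, Int.floor_add_intCast]; ring

lemma fract_succ_digit (hb : 0 < b) (hx : 0 ≤ x) (k : ℕ) :
    Int.fract (x * (b : ℝ) ^ (k + 1)) =
      (b : ℝ) * Int.fract (x * (b : ℝ) ^ k) - (bdigit b x (k + 1) : ℝ) := by
  rw [Int.fract, floor_succ_digit hb hx k]
  rw [Int.fract]
  push_cast
  rw [pow_succ]
  ring

lemma floor_eq_enc (hb : 0 < b) (hx : x ∈ Set.Ico (0 : ℝ) 1) (k : ℕ) :
    ⌊x * (b : ℝ) ^ k⌋ = (enc b (fun p => bdigit b x (p + 1)) k : ℤ) := by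
  induction k with
  | zero => simp [enc, Int.floor_eq_zero_iff, hx]
  | succ k ih =>
    rw [floor_succ_digit hb hx.1 k, ih, enc_succ]
    push_cast
    ring

lemma exists_digit_ne (hb : 2 ≤ b) (hx : x ∈ Set.Ico (0 : ℝ) 1) (k : ℕ) :
    ∃ a, k ≤ a ∧ bdigit b x (a + 1) ≠ b - 1 := by
  by_contra hcon
  push_neg at hcon
  have hb0 : 0 < b := by omega
  set f : ℕ → ℝ := fun j => Int.fract (x * (b : ℝ) ^ j) with hf
  have key : ∀ j, 1 - f (k + j) = (b : ℝ) ^ j * (1 - f k) := by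
    intro j
    induction j with
    | zero => simp
    | succ j ih =>
      have hd : (bdigit b x (k + j + 1) : ℝ) = (b : ℝ) - 1 := by
        rw [hcon (k + j) (by omega)]
        push_cast [Nat.cast_sub (by omega : 1 ≤ b)]
        ring
      have : f (k + (j + 1)) = (b : ℝ) * f (k + j) - ((b : ℝ) - 1) := by
        have := fract_succ_digit hb0 hx.1 (k + j)
        rw [hd] at this
        simpa [hf, show k + (j + 1) = (k + j) + 1 by omega] using this
      rw [this, pow_succ]
      nlinarith [ih]
  have hfk1 : f k < 1 := Int.fract_lt_one _
  have hpos : 0 < 1 - f k := by linarith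
  obtain ⟨j, hj⟩ := pow_unbounded_of_one_lt ((1 - f k)⁻¹) (by exact_mod_cast hb : (1 : ℝ) < b)
  have h1 : 1 < (b : ℝ) ^ j * (1 - f k) := by
    have h := mul_lt_mul_of_pos_right hj hpos
    rwa [inv_mul_cancel₀ (ne_of_gt hpos)] at h
  have h2 := key j
  have h3 : 0 ≤ f (k + j) := Int.fract_nonneg _
  linarith

end RealDigits


section Tsum

variable {b : ℕ}

lemma geom_summable (hb : 2 ≤ b) : Summable (fun p : ℕ => ((b : ℝ))⁻¹ ^ p) := by
  have hb1 : (1 : ℝ) < b := by exact_mod_cast hb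
  exact summable_geometric_of_lt_one (by positivity) (inv_lt_one_of_one_lt₀ hb1)

lemma digit_le_geom (hb : 2 ≤ b) (c : ℕ → ℕ) (hc : ∀ p, c p < b) (p : ℕ) :
    (c p : ℝ) / (b : ℝ) ^ (p + 1) ≤ ((b : ℝ))⁻¹ ^ p := by
  have hb1 : (1 : ℝ) < b := by exact_mod_cast hb
  have hb0 : (0 : ℝ) < b := by linarith
  have h1 : (c p : ℝ) ≤ b := by exact_mod_cast (hc p).le
  rw [inv_pow, inv_eq_one_div, div_le_div_iff₀ (by positivity) (by positivity), pow_succ,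
    one_mul]
  calc (c p : ℝ) * (b : ℝ) ^ p ≤ (b : ℝ) * (b : ℝ) ^ p := by
        exact mul_le_mul_of_nonneg_right h1 (by positivity)
    _ = (b : ℝ) ^ p * (b : ℝ) := by ring

lemma summable_digits (hb : 2 ≤ b) (c : ℕ → ℕ) (hc : ∀ p, c p < b) :
    Summable (fun p => (c p : ℝ) / (b : ℝ) ^ (p + 1)) :=
  Summable.of_nonneg_of_le (fun p => by positivity) (digit_le_geom hb c hc) (geom_summable hb)

lemma tsum_pow_geom (hb : 2 ≤ b) (k : ℕ) :
    ∑' p : ℕ, ((b : ℝ) - 1) / (b : ℝ) ^ (p + k + 1) = 1 / (b : ℝ) ^ k := by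
  have hb1 : (1 : ℝ) < b := by exact_mod_cast hb
  have hb0 : (0 : ℝ) < b := by linarith
  have hbne : (b : ℝ) ≠ 0 := ne_of_gt hb0
  have hgeo : ∑' p : ℕ, ((b : ℝ))⁻¹ ^ p = (1 - ((b : ℝ))⁻¹)⁻¹ :=
    tsum_geometric_of_lt_one (by positivity) (inv_lt_one_of_one_lt₀ hb1)
  have hterm : ∀ p : ℕ, ((b : ℝ) - 1) / (b : ℝ) ^ (p + k + 1) =
      (((b : ℝ) - 1) / (b : ℝ) ^ (k + 1)) * ((b : ℝ))⁻¹ ^ p := by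
    intro p
    rw [inv_pow]
    have h2 : (b : ℝ) ^ (p + k + 1) = (b : ℝ) ^ (k + 1) * (b : ℝ) ^ p := by
      rw [← pow_add]; ring_nf
    rw [h2]
    field_simp
  calc ∑' p : ℕ, ((b : ℝ) - 1) / (b : ℝ) ^ (p + k + 1)
      = ∑' p : ℕ, (((b : ℝ) - 1) / (b : ℝ) ^ (k + 1)) * ((b : ℝ))⁻¹ ^ p :=
        tsum_congr hterm
    _ = (((b : ℝ) - 1) / (b : ℝ) ^ (k + 1)) * (1 - ((b : ℝ))⁻¹)⁻¹ := by
        rw [tsum_mul_left, hgeo]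
    _ = 1 / (b : ℝ) ^ k := by
        have hb1ne : (b : ℝ) - 1 ≠ 0 := by linarith
        rw [show (1 : ℝ) - ((b : ℝ))⁻¹ = ((b : ℝ) - 1) / b by field_simp, inv_div, pow_succ]
        field_simp

lemma summable_tail_geom (hb : 2 ≤ b) (k : ℕ) :
    Summable (fun p : ℕ => ((b : ℝ) - 1) / (b : ℝ) ^ (p + k + 1)) := by
  have hterm : (fun p : ℕ => ((b : ℝ) - 1) / (b : ℝ) ^ (p + k + 1)) =
      fun p : ℕ => (((b : ℝ) - 1) / (b : ℝ) ^ (k + 1)) * ((b : ℝ))⁻¹ ^ p := by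
    funext p
    have hb1 : (1 : ℝ) < b := by exact_mod_cast hb
    have hb0 : (0 : ℝ) < b := by linarith
    rw [inv_pow]
    have h2 : (b : ℝ) ^ (p + k + 1) = (b : ℝ) ^ (k + 1) * (b : ℝ) ^ p := by
      rw [← pow_add]; ring_nf
    rw [h2]
    field_simp
  rw [hterm]
  exact (geom_summable hb).mul_left _

lemma digit_val (hb : 2 ≤ b) (c : ℕ → ℕ) (hc : ∀ p, c p < b)
    (hinf : ∀ k, ∃ p, k ≤ p ∧ c p ≠ b - 1) (k : ℕ) :
    (enc b c k : ℝ) / (b : ℝ) ^ k ≤ ∑' p : ℕ, (c p : ℝ) / (b : ℝ) ^ (p + 1) ∧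
      ∑' p : ℕ, (c p : ℝ) / (b : ℝ) ^ (p + 1) < ((enc b c k : ℝ) + 1) / (b : ℝ) ^ k := by
  have hb1 : (1 : ℝ) < b := by exact_mod_cast hb
  have hb0 : (0 : ℝ) < b := by linarith
  have hsum := summable_digits hb c hc
  have hsplit := Summable.sum_add_tsum_nat_add k hsum
  have hhead : ∑ p ∈ Finset.range k, (c p : ℝ) / (b : ℝ) ^ (p + 1)
      = (enc b c k : ℝ) / (b : ℝ) ^ k := by
    unfold enc
    push_cast
    rw [Finset.sum_div]
    apply Finset.sum_congr rfl
    intro p hp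
    have hpk := Finset.mem_range.mp hp
    have hek : (b : ℝ) ^ k = (b : ℝ) ^ (k - 1 - p) * (b : ℝ) ^ (p + 1) := by
      rw [← pow_add]
      congr 1
      omega
    rw [hek]
    have hne1 : ((b : ℝ)) ^ (k - 1 - p) ≠ 0 := by positivity
    have hne2 : ((b : ℝ)) ^ (p + 1) ≠ 0 := by positivity
    field_simp
  have htail0 : 0 ≤ ∑' p : ℕ, (c (p + k) : ℝ) / (b : ℝ) ^ (p + k + 1) :=
    tsum_nonneg fun p => by positivity
  have htail1 : ∑' p : ℕ, (c (p + k) : ℝ) / (b : ℝ) ^ (p + k + 1) < 1 / (b : ℝ) ^ k := by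
    obtain ⟨p0, hp0k, hp0⟩ := hinf k
    have hq : p0 - k + k = p0 := by omega
    rw [← tsum_pow_geom hb k]
    apply Summable.tsum_lt_tsum_of_nonneg (i := p0 - k)
    · intro p; positivity
    · intro p
      apply div_le_div_of_nonneg_right ?_ (by positivity)
      have h : c (p + k) ≤ b - 1 := by have := hc (p + k); omega
      calc (c (p + k) : ℝ) ≤ ((b - 1 : ℕ) : ℝ) := by exact_mod_cast h
        _ = (b : ℝ) - 1 := by push_cast [Nat.cast_sub (by omega : 1 ≤ b)]; ring
    · rw [hq]
      apply div_lt_div_of_pos_right ?_ (by positivity)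
      have h1 : c p0 + 1 < b := by have := hc p0; omega
      have h2 : (c p0 : ℝ) + 1 < b := by exact_mod_cast h1
      linarith
    · exact summable_tail_geom hb k
  constructor
  · rw [← hsplit, hhead]
    linarith
  · rw [← hsplit, hhead, add_div]
    linarith

end Tsum



section Comb

/-- `eAux d k r = ⌈(k - r)/d⌉`: number of `p < k` with `p % d = r`. -/
def eAux (d k r : ℕ) : ℕ := (k - r + d - 1) / d

lemma keyE {d : ℕ} (hd : 0 < d) {r : ℕ} (hr : r < d) (a k : ℕ) :
    a * d + r < k ↔ a < eAux d k r := by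
  rw [eAux]
  conv_rhs => rw [← Nat.add_one_le_iff, Nat.le_div_iff_mul_le hd, add_mul, one_mul]
  generalize a * d = A
  omega

lemma sum_eAux {d : ℕ} (hd : 0 < d) (k : ℕ) : ∑ r ∈ Finset.range d, eAux d k r = k := by
  have h1 : ∀ p ∈ Finset.range k, p % d ∈ Finset.range d := fun p _ =>
    Finset.mem_range.mpr (Nat.mod_lt _ hd)
  have h2 := Finset.card_eq_sum_card_fiberwise h1
  rw [Finset.card_range] at h2
  conv_rhs => rw [h2]
  apply Finset.sum_congr rfl
  intro r hr
  have hrd : r < d := Finset.mem_range.mp hr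
  have himg : (Finset.range k).filter (fun p => p % d = r) =
      (Finset.range (eAux d k r)).image (fun a => a * d + r) := by
    ext p
    simp only [Finset.mem_filter, Finset.mem_image, Finset.mem_range]
    constructor
    · rintro ⟨hpk, hpr⟩
      refine ⟨p / d, ?_, ?_⟩
      · rw [← keyE hd hrd]
        have : p / d * d + r = p := by
          conv_rhs => rw [← Nat.div_add_mod p d]
          rw [hpr]; ring
        rwa [this]
      · conv_rhs => rw [← Nat.div_add_mod p d]
        rw [hpr]; ring
    · rintro ⟨a, ha, rfl⟩
      exact ⟨(keyE hd hrd a k).mpr ha, by rw [Nat.mul_add_mod', Nat.mod_eq_of_lt hrd]⟩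
  rw [himg, Finset.card_image_of_injective _ (fun a1 a2 h => by
    have : a1 * d = a2 * d := by omega
    exact Nat.eq_of_mul_eq_mul_right hd this), Finset.card_range]

end Comb

section Interlace

variable {b d : ℕ}

/-- The interlaced digit sequence of a block. -/
def cfun (b d : ℕ) (hd : 0 < d) (x : Fin d → ℝ) (p : ℕ) : ℕ :=
  bdigit b (x ⟨p % d, Nat.mod_lt _ hd⟩) (p / d + 1)

set_option maxHeartbeats 1000000 in
lemma interlaceR_eq (hb : 2 ≤ b) (hd : 0 < d) (x : Fin d → ℝ) :
    interlaceR b d x = ∑' p : ℕ, (cfun b d hd x p : ℝ) / (b : ℝ) ^ (p + 1) := by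
  classical
  have hb0 : 0 < b := by omega
  haveI : NeZero d := ⟨by omega⟩
  set g : ℕ → ℝ := fun p => (cfun b d hd x p : ℝ) / (b : ℝ) ^ (p + 1) with hg
  have hgsum : Summable g := summable_digits hb _ (fun p => bdigit_lt hb0 _ _)
  have hE : ∀ q : ℕ × Fin d, (Nat.divModEquiv d).symm q = q.1 * d + (q.2 : ℕ) := fun q => rfl
  have h1 : ∑' q : ℕ × Fin d, g ((Nat.divModEquiv d).symm q) = ∑' p : ℕ, g p :=
    Equiv.tsum_eq (Nat.divModEquiv d).symm g
  have hsum2 : Summable fun q : ℕ × Fin d => g ((Nat.divModEquiv d).symm q) :=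
    (Equiv.summable_iff (Nat.divModEquiv d).symm).mpr hgsum
  have h2 : ∑' q : ℕ × Fin d, g ((Nat.divModEquiv d).symm q)
      = ∑' a : ℕ, ∑' r : Fin d, g ((Nat.divModEquiv d).symm (a, r)) :=
    Summable.tsum_prod' hsum2 fun a => (hsum2.prod_factor a)
  have hterm : ∀ (a : ℕ) (r : Fin d), g ((Nat.divModEquiv d).symm (a, r))
      = (bdigit b (x r) (a + 1) : ℝ) / (b : ℝ) ^ ((r : ℕ) + 1 + a * d) := by
    intro a r
    rw [hE]
    have hmod : (a * d + (r : ℕ)) % d = (r : ℕ) := by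
      rw [Nat.mul_add_mod', Nat.mod_eq_of_lt r.2]
    have hdiv : (a * d + (r : ℕ)) / d = a := by
      rw [mul_comm, Nat.mul_add_div hd, Nat.div_eq_of_lt r.2, Nat.add_zero]
    have hfin : (⟨(a * d + (r : ℕ)) % d, Nat.mod_lt _ hd⟩ : Fin d) = r := by
      apply Fin.ext; exact hmod
    have hexp : a * d + (r : ℕ) + 1 = (r : ℕ) + 1 + a * d := by ring
    rw [hg]
    simp only [cfun, hfin, hdiv, hexp]
  rw [interlaceR]
  rw [← h1, h2]
  apply tsum_congr
  intro a
  rw [tsum_fintype]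
  exact Finset.sum_congr rfl fun r _ => (hterm a r).symm

lemma cfun_lt (hb : 0 < b) (hd : 0 < d) (x : Fin d → ℝ) (p : ℕ) : cfun b d hd x p < b :=
  bdigit_lt hb _ _

lemma cfun_inf (hb : 2 ≤ b) (hd : 0 < d) (x : Fin d → ℝ)
    (hx : x ⟨0, hd⟩ ∈ Set.Ico (0 : ℝ) 1) (k : ℕ) :
    ∃ p, k ≤ p ∧ cfun b d hd x p ≠ b - 1 := by
  obtain ⟨a, hak, ha⟩ := exists_digit_ne hb hx k
  refine ⟨a * d, le_trans hak (Nat.le_mul_of_pos_right a hd), ?_⟩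
  have hmod : (a * d) % d = 0 := Nat.mul_mod_left a d
  have hdiv : (a * d) / d = a := Nat.mul_div_cancel a hd
  have hfin : (⟨(a * d) % d, Nat.mod_lt _ hd⟩ : Fin d) = ⟨0, hd⟩ := Fin.ext hmod
  rw [cfun, hfin, hdiv]
  exact ha

end Interlace


section MemIff

variable {b d : ℕ}

lemma Ico_unique {B y : ℝ} (hB : 0 < B) {u v : ℕ}
    (hy : y ∈ Set.Ico ((u : ℝ) / B) (((u : ℝ) + 1) / B)) :
    (y ∈ Set.Ico ((v : ℝ) / B) (((v : ℝ) + 1) / B)) ↔ u = v := by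
  constructor
  · intro hv
    have h1 : (u : ℝ) / B < ((v : ℝ) + 1) / B := lt_of_le_of_lt hy.1 hv.2
    have h2 : (v : ℝ) / B < ((u : ℝ) + 1) / B := lt_of_le_of_lt hv.1 hy.2
    rw [div_lt_div_iff_of_pos_right hB] at h1 h2
    have h1' : u < v + 1 := by exact_mod_cast h1
    have h2' : v < u + 1 := by exact_mod_cast h2
    omega
  · rintro rfl
    exact hy

lemma coord_mem_iff (hb : 0 < b) {x : ℝ} (hx : x ∈ Set.Ico (0 : ℝ) 1) (k u : ℕ) :
    x ∈ Set.Ico ((u : ℝ) / (b : ℝ) ^ k) (((u : ℝ) + 1) / (b : ℝ) ^ k) ↔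
      enc b (fun a => bdigit b x (a + 1)) k = u := by
  have hb0 : (0 : ℝ) < b := by exact_mod_cast hb
  have hBk : (0 : ℝ) < (b : ℝ) ^ k := by positivity
  set E := enc b (fun a => bdigit b x (a + 1)) k with hE
  have hfl := floor_eq_enc hb hx k
  have hmem : x ∈ Set.Ico ((E : ℝ) / (b : ℝ) ^ k) (((E : ℝ) + 1) / (b : ℝ) ^ k) := by
    constructor
    · rw [div_le_iff₀ hBk]
      have := Int.floor_le (x * (b : ℝ) ^ k)
      rw [hfl] at this
      exact_mod_cast this
    · rw [lt_div_iff₀ hBk]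
      have := Int.lt_floor_add_one (x * (b : ℝ) ^ k)
      rw [hfl] at this
      push_cast at this ⊢
      linarith
  rw [Ico_unique hBk hmem]

lemma interlace_mem_iff (hb : 2 ≤ b) (hd : 0 < d) (x : Fin d → ℝ)
    (hx : ∀ r, x r ∈ Set.Ico (0 : ℝ) 1) (k u : ℕ) :
    interlaceR b d x ∈ Set.Ico ((u : ℝ) / (b : ℝ) ^ k) (((u : ℝ) + 1) / (b : ℝ) ^ k) ↔
      enc b (cfun b d hd x) k = u := by
  have hb0 : 0 < b := by omega
  have hBk : (0 : ℝ) < (b : ℝ) ^ k := by positivity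
  have hdv := digit_val hb (cfun b d hd x) (cfun_lt hb0 hd x)
    (cfun_inf hb hd x (hx ⟨0, hd⟩)) k
  rw [interlaceR_eq hb hd x]
  have hmem : ∑' p : ℕ, (cfun b d hd x p : ℝ) / (b : ℝ) ^ (p + 1) ∈
      Set.Ico ((enc b (cfun b d hd x) k : ℝ) / (b : ℝ) ^ k)
        (((enc b (cfun b d hd x) k : ℝ) + 1) / (b : ℝ) ^ k) := ⟨hdv.1, hdv.2⟩
  rw [Ico_unique hBk hmem]

/-- The digit-logic core: the interlaced prefix equals `av` iff each coordinate prefix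
equals the corresponding slice of `av`'s digits. -/
lemma block_iff (hb : 2 ≤ b) (hd : 0 < d) (x : Fin d → ℝ) (k av : ℕ) (hav : av < b ^ k) :
    enc b (cfun b d hd x) k = av ↔
      ∀ r : Fin d, enc b (fun a => bdigit b (x r) (a + 1)) (eAux d k (r : ℕ)) =
        enc b (fun a => av / b ^ (k - 1 - (a * d + (r : ℕ))) % b) (eAux d k (r : ℕ)) := by
  have hb0 : 0 < b := by omega
  have hclt : ∀ p < k, cfun b d hd x p < b := fun p _ => cfun_lt hb0 hd x p
  have hcfun_at : ∀ (a : ℕ) (r : Fin d), cfun b d hd x (a * d + (r : ℕ))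
      = bdigit b (x r) (a + 1) := by
    intro a r
    have hmod : (a * d + (r : ℕ)) % d = (r : ℕ) := by
      rw [Nat.mul_add_mod', Nat.mod_eq_of_lt r.2]
    have hdiv : (a * d + (r : ℕ)) / d = a := by
      rw [mul_comm, Nat.mul_add_div hd, Nat.div_eq_of_lt r.2, Nat.add_zero]
    have hfin : (⟨(a * d + (r : ℕ)) % d, Nat.mod_lt _ hd⟩ : Fin d) = r := Fin.ext hmod
    rw [cfun, hfin, hdiv]
  constructor
  · intro h r
    apply enc_congr
    intro a ha
    have hlt : a * d + (r : ℕ) < k := (keyE hd r.2 a k).mpr ha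
    have h1 := enc_digit b hb0 _ k hclt _ hlt
    rw [h] at h1
    rw [← hcfun_at a r, h1]
  · intro h
    apply digits_inj b k _ _ (enc_lt b hb0 _ k hclt) hav
    intro p hp
    rw [enc_digit b hb0 _ k hclt p hp]
    -- decompose p
    set r : Fin d := ⟨p % d, Nat.mod_lt _ hd⟩ with hr
    set a := p / d with ha
    have hpar : a * d + (r : ℕ) = p := by
      rw [hr, ha]
      conv_rhs => rw [← Nat.div_add_mod p d]
      ring
    have halt : a < eAux d k (r : ℕ) := by
      rw [← keyE hd r.2 a k, hpar]
      exact hp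
    have hrd : ∀ q < eAux d k (r : ℕ), bdigit b (x r) (q + 1) < b := fun q _ =>
      bdigit_lt hb0 _ _
    have hrd2 : ∀ q < eAux d k (r : ℕ), av / b ^ (k - 1 - (q * d + (r : ℕ))) % b < b :=
      fun q _ => Nat.mod_lt _ hb0
    have h1 := enc_digit b hb0 _ _ hrd a halt
    have h2 := enc_digit b hb0 _ _ hrd2 a halt
    rw [h r] at h1
    rw [h1] at h2
    rw [← hpar, hcfun_at a r]
    exact h2

end MemIff



section Main

variable {b d s : ℕ}

lemma embIdx_div (hd : 0 < d) (i : Fin s) (r : Fin d) : ((embIdx d s i r : ℕ)) / d = i := by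
  show ((i : ℕ) * d + (r : ℕ)) / d = i
  rw [mul_comm, Nat.mul_add_div hd, Nat.div_eq_of_lt r.2, Nat.add_zero]

lemma embIdx_mod (i : Fin s) (r : Fin d) : ((embIdx d s i r : ℕ)) % d = r := by
  show ((i : ℕ) * d + (r : ℕ)) % d = r
  rw [Nat.mul_add_mod', Nat.mod_eq_of_lt r.2]

def blockIdx (d s : ℕ) (hd : 0 < d) (j : Fin (d * s)) : Fin s :=
  ⟨(j : ℕ) / d, by
    rw [Nat.div_lt_iff_lt_mul hd]
    exact lt_of_lt_of_le j.2 (le_of_eq (Nat.mul_comm d s))⟩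

lemma blockIdx_embIdx (hd : 0 < d) (i : Fin s) (r : Fin d) :
    blockIdx d s hd (embIdx d s i r) = i := Fin.ext (embIdx_div hd i r)

lemma embIdx_bijective (hd : 0 < d) :
    Function.Bijective (fun p : Fin s × Fin d => embIdx d s p.1 p.2) := by
  rw [Fintype.bijective_iff_injective_and_card]
  constructor
  · rintro ⟨i, r⟩ ⟨i', r'⟩ hpq
    have hpq' : embIdx d s i r = embIdx d s i' r' := hpq
    have h1 : blockIdx d s hd (embIdx d s i r) = blockIdx d s hd (embIdx d s i' r') := by
      rw [hpq']
    rw [blockIdx_embIdx hd, blockIdx_embIdx hd] at h1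
    have h2 : ((embIdx d s i r : ℕ)) % d = ((embIdx d s i' r' : ℕ)) % d := by rw [hpq']
    rw [embIdx_mod, embIdx_mod] at h2
    exact Prod.ext h1 (Fin.ext h2)
  · simp [mul_comm]

end Main

end Statement7Aux

/-- interlacing a `(t,m,ds)`-net gives a `(t,m,s)`-net. -/
theorem statement7 (b d s m t : ℕ) (hb : 2 ≤ b) (hd : 1 ≤ d) (hs : 1 ≤ s) (ht : t ≤ m)
    (P : Fin (b ^ m) → Fin (d * s) → ℝ) (hP : ∀ n, P n ∈ unitBox (d * s))
    (hnet : IsNet b m (d * s) t P) :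
    IsNet b m s t fun n => interlaceB b d s (P n) := by
  have hb0 : 0 < b := by omega
  intro dv hdv av hav
  set dv' : Fin (d * s) → ℕ := fun j => eAux d (dv (blockIdx d s hd j)) ((j : ℕ) % d) with hdv'
  set av' : Fin (d * s) → ℕ := fun j =>
    enc b (fun a => av (blockIdx d s hd j) /
      b ^ (dv (blockIdx d s hd j) - 1 - (a * d + (j : ℕ) % d)) % b) (dv' j) with hav'
  have hdv'e : ∀ (i : Fin s) (r : Fin d), dv' (embIdx d s i r) = eAux d (dv i) (r : ℕ) := by
    intro i r
    simp only [hdv', blockIdx_embIdx hd, embIdx_mod]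
  have hav'e : ∀ (i : Fin s) (r : Fin d), av' (embIdx d s i r) =
      enc b (fun a => av i / b ^ (dv i - 1 - (a * d + (r : ℕ))) % b) (eAux d (dv i) (r : ℕ)) := by
    intro i r
    simp only [hav', hdv', blockIdx_embIdx hd, embIdx_mod]
  -- sum equality
  have hsum : ∑ j, dv' j = ∑ i, dv i := by
    rw [← Fintype.sum_bijective _ (embIdx_bijective hd)
      (fun p : Fin s × Fin d => dv' (embIdx d s p.1 p.2)) dv' (fun p => rfl)]
    rw [Fintype.sum_prod_type]
    apply Finset.sum_congr rfl
    intro i _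
    rw [Finset.sum_congr rfl (fun r _ => hdv'e i r)]
    rw [Fin.sum_univ_eq_sum_range (fun r => eAux d (dv i) r) d]
    exact sum_eAux hd (dv i)
  have hbound : ∀ j, av' j < b ^ dv' j := fun j =>
    enc_lt b hb0 _ _ (fun p _ => Nat.mod_lt _ hb0)
  have hcard := hnet dv' (by rw [hsum]; exact hdv) av' hbound
  -- membership in [0,1)
  have hx : ∀ (n : Fin (b ^ m)) (j : Fin (d * s)), P n j ∈ Set.Ico (0 : ℝ) 1 := by
    intro n j
    exact (hP n) j (Set.mem_univ j)
  -- iff per block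
  have hiff : ∀ (n : Fin (b ^ m)) (i : Fin s),
      (interlaceB b d s (P n) i ∈
        Set.Ico ((av i : ℝ) / (b : ℝ) ^ dv i) (((av i : ℝ) + 1) / (b : ℝ) ^ dv i)) ↔
      ∀ r : Fin d, P n (embIdx d s i r) ∈
        Set.Ico ((av' (embIdx d s i r) : ℝ) / (b : ℝ) ^ dv' (embIdx d s i r))
          (((av' (embIdx d s i r) : ℝ) + 1) / (b : ℝ) ^ dv' (embIdx d s i r)) := by
    intro n i
    have hIB : interlaceB b d s (P n) i = interlaceR b d (fun r => P n (embIdx d s i r)) := rfl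
    rw [hIB, interlace_mem_iff hb hd _ (fun r => hx n (embIdx d s i r)) (dv i) (av i),
      block_iff hb hd _ (dv i) (av i) (hav i)]
    apply forall_congr'
    intro r
    rw [hdv'e i r, hav'e i r, coord_mem_iff hb0 (hx n (embIdx d s i r))]
  have key : ∀ n : Fin (b ^ m),
      (∀ i, interlaceB b d s (P n) i ∈
        Set.Ico ((av i : ℝ) / (b : ℝ) ^ dv i) (((av i : ℝ) + 1) / (b : ℝ) ^ dv i)) ↔
      (∀ j, P n j ∈ Set.Ico ((av' j : ℝ) / (b : ℝ) ^ dv' j)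
        (((av' j : ℝ) + 1) / (b : ℝ) ^ dv' j)) := by
    intro n
    constructor
    · intro h j
      have hj : j = embIdx d s (blockIdx d s hd j) ⟨(j : ℕ) % d, Nat.mod_lt _ hd⟩ := by
        apply Fin.ext
        show (j : ℕ) = (j : ℕ) / d * d + (j : ℕ) % d
        exact (Nat.div_add_mod' _ _).symm
      rw [hj]
      exact (hiff n (blockIdx d s hd j)).mp (h _) _
    · intro h i
      exact (hiff n i).mpr (fun r => h (embIdx d s i r))
  calc (Finset.univ.filter fun n =>
        ∀ i, interlaceB b d s (P n) i ∈
          Set.Ico ((av i : ℝ) / (b : ℝ) ^ dv i) (((av i : ℝ) + 1) / (b : ℝ) ^ dv i)).card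
      = (Finset.univ.filter fun n =>
        ∀ j, P n j ∈ Set.Ico ((av' j : ℝ) / (b : ℝ) ^ dv' j)
          (((av' j : ℝ) + 1) / (b : ℝ) ^ dv' j)).card := by
        congr 1
        exact Finset.filter_congr (fun n _ => key n)
    _ = b ^ (m - ∑ j, dv' j) := hcard
    _ = b ^ (m - ∑ i, dv i) := by rw [hsum]

end Paper
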